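/- Let N ≥ 1, m ≥ 1, let u : Fin m → (ZMod N → ZMod 4), and let κ, κ' : Fin m → ZMod 4 satisfy κ_k = κ'_k for all k ≠ 0. Define s(t) = (1+i) · ∑_{k=0}^{m−1} 2^k · i^{u_k(t)} · i^{κ_k} and s'(t) = (1+i) · ∑_{k=0}^{m−1} 2^k · i^{u_k(t)} · i^{κ'_k}. Then ∑_{t ∈ ZMod N} |s(t) − s'(t)|² = 2·N·|i^{κ_0} − i^{κ'_0}|². -/

import Mathlib

/-- For `a ∈ ZMod 4`, the complex number `i^a := Complex.I ^ a.val`. -/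
noncomputable def zi (a : ZMod 4) : ℂ := Complex.I ^ a.val

/-- Periodic correlation of complex sequences of period `N` at shift `τ`:
`θ_{s,s'}(τ) = ∑_t s(t+τ) · conj (s'(t))`. -/
noncomputable def pcorr {N : ℕ} [NeZero N] (s s' : ZMod N → ℂ) (τ : ZMod N) : ℂ :=
  ∑ t : ZMod N, s (t + τ) * (starRingEnd ℂ) (s' t)

/-- Periodic correlation of quaternary sequences of period `N` at shift `τ`:
`θ_{u,v}(τ) = ∑_t i^{u(t+τ)} · conj (i^{v(t)})`. -/
noncomputable def qcorr {N : ℕ} [NeZero N] (u v : ZMod N → ZMod 4) (τ : ZMod N) : ℂ :=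
  ∑ t : ZMod N, zi (u (t + τ)) * (starRingEnd ℂ) (zi (v t))

/-- If two data modulations of the same `4^m`-QAM spreading sequence differ
only in the component `κ_0`, the squared Euclidean distance between them is exactly
`2·N·|i^{κ_0} - i^{κ'_0}|²`. -/
theorem qam_distance_single_component (N m : ℕ) [NeZero N] [NeZero m]
    (u : Fin m → ZMod N → ZMod 4) (κ κ' : Fin m → ZMod 4)
    (hκ : ∀ k : Fin m, k ≠ 0 → κ k = κ' k) :
    ∑ t : ZMod N,
      ‖
        ((1 + Complex.I) * ∑ k : Fin m, (2 : ℂ) ^ (k : ℕ) * zi (u k t) * zi (κ k)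
        - (1 + Complex.I) * ∑ k : Fin m, (2 : ℂ) ^ (k : ℕ) * zi (u k t) * zi (κ' k))‖ ^ 2
    = 2 * N * ‖zi (κ 0) - zi (κ' 0)‖ ^ 2 := by
  have hzi : ∀ a : ZMod 4, ‖zi a‖ = 1 := by
    intro a; simp [zi]
  have h1i : ‖1 + Complex.I‖ ^ 2 = 2 := by
    rw [← Complex.normSq_eq_norm_sq, Complex.normSq_apply]; simp; norm_num
  have key : ∀ t : ZMod N,
      ‖
        ((1 + Complex.I) * ∑ k : Fin m, (2 : ℂ) ^ (k : ℕ) * zi (u k t) * zi (κ k)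
        - (1 + Complex.I) * ∑ k : Fin m, (2 : ℂ) ^ (k : ℕ) * zi (u k t) * zi (κ' k))‖ ^ 2
      = 2 * ‖zi (κ 0) - zi (κ' 0)‖ ^ 2 := by
    intro t
    have hdiff : (∑ k : Fin m, (2 : ℂ) ^ (k : ℕ) * zi (u k t) * zi (κ k))
        - ∑ k : Fin m, (2 : ℂ) ^ (k : ℕ) * zi (u k t) * zi (κ' k)
        = zi (u 0 t) * (zi (κ 0) - zi (κ' 0)) := by
      rw [← Finset.sum_sub_distrib]
      rw [Fintype.sum_eq_single (0 : Fin m)]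
      · simp [mul_sub]
      · intro k hk; rw [hκ k hk]; ring
    rw [← mul_sub, hdiff, norm_mul, norm_mul, mul_pow, mul_pow, h1i, hzi]
    ring
  rw [Finset.sum_congr rfl (fun t _ => key t)]
  simp [Finset.card_univ]
  ring
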